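/- The determinant of the explicit eigenvector matrix R equals 4·ρ₁c₁·ρ₂c₂; since ρ₁, ρ₂, c₁, c₂ > 0, R is invertible, so its columns form a basis of ℝ⁷. -/

import Mathlib

set_option maxHeartbeats 1000000
set_option maxRecDepth 40000

open Matrix

lemma det_aux_six (x y : ℝ) :
    (!![1, 1, 0, 0, 0, 0;
        x, -x, 0, 0, 0, 0;
        0, 0, 1, 0, 0, 0;
        0, 0, 0, 1, 1, 0;
        0, 0, 0, y, -y, 0;
        0, 0, 0, 0, 0, 1] : Matrix (Fin 6) (Fin 6) ℝ).det = 4 * x * y := by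
  simp [Matrix.det_succ_row_zero, Fin.sum_univ_succ]
  simp [Fin.succAbove, Fin.lt_def]
  ring

lemma det_aux (a b d e x y : ℝ) :
    (!![1, 0, 0, 0, 0, 0, 0;
        a, 1, 1, 0, 0, 0, 0;
        b, x, -x, 0, 0, 0, 0;
        0, 0, 0, 1, 0, 0, 0;
        d, 0, 0, 0, 1, 1, 0;
        e, 0, 0, 0, y, -y, 0;
        0, 0, 0, 0, 0, 0, 1] : Matrix (Fin 7) (Fin 7) ℝ).det = 4 * x * y := by
  have h : (!![1, 0, 0, 0, 0, 0, 0;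
        a, 1, 1, 0, 0, 0, 0;
        b, x, -x, 0, 0, 0, 0;
        0, 0, 0, 1, 0, 0, 0;
        d, 0, 0, 0, 1, 1, 0;
        e, 0, 0, 0, y, -y, 0;
        0, 0, 0, 0, 0, 0, 1] : Matrix (Fin 7) (Fin 7) ℝ).submatrix Fin.succ Fin.succ =
      !![1, 1, 0, 0, 0, 0;
        x, -x, 0, 0, 0, 0;
        0, 0, 1, 0, 0, 0;
        0, 0, 0, 1, 1, 0;
        0, 0, 0, y, -y, 0;
        0, 0, 0, 0, 0, 1] := by
    ext i j
    fin_cases i <;> fin_cases j <;> rfl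
  rw [Matrix.det_succ_row_zero]
  rw [Fin.sum_univ_succ, Fin.sum_univ_succ, Fin.sum_univ_succ, Fin.sum_univ_succ,
    Fin.sum_univ_succ, Fin.sum_univ_succ, Fin.sum_univ_one]
  norm_num [h, det_aux_six, Matrix.cons_val_two, Matrix.vecHead, Matrix.vecTail]

/-- The determinant of the explicit eigenvector matrix `R` equals `4 ρ₁ c₁ ρ₂ c₂`;
since `ρ₁, ρ₂, c₁, c₂ > 0`, `R` is invertible, so its columns form a basis of `ℝ⁷`. -/
theorem eigenvector_matrix_det
    (α₁ ρ₁ ρ₂ c₁ c₂ u₁ u₂ p₁ p₂ : ℝ)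
    (hα₁ : 0 < α₁) (hα₁' : α₁ < 1)
    (hρ₁ : 0 < ρ₁) (hρ₂ : 0 < ρ₂) (hc₁ : 0 < c₁) (hc₂ : 0 < c₂)
    (α₂ m₁ m₂ ρ Y₁ Y₂ u W Δ₁ Δ₂ : ℝ)
    (hα₂ : α₂ = 1 - α₁) (hm₁ : m₁ = α₁ * ρ₁) (hm₂ : m₂ = α₂ * ρ₂)
    (hρ : ρ = m₁ + m₂) (hY₁ : Y₁ = m₁ / ρ) (hY₂ : Y₂ = m₂ / ρ)
    (hu : u = Y₁ * u₁ + Y₂ * u₂) (hW : W = u₁ - u₂)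
    (hΔ₁ : Δ₁ = (u₁ - u) ^ 2 - c₁ ^ 2) (hΔ₂ : Δ₂ = (u₂ - u) ^ 2 - c₂ ^ 2)
    (hΔ₁0 : Δ₁ ≠ 0) (hΔ₂0 : Δ₂ ≠ 0)
    (R : Matrix (Fin 7) (Fin 7) ℝ)
    (hR : R = !![1, 0, 0, 0, 0, 0, 0;
                 (-Y₂ * W / Δ₁) * ((p₁ - p₂) / ρ - c₁ ^ 2 / α₁), 1, 1, 0, 0, 0, 0;
                 (ρ₁ * c₁ ^ 2 / Δ₁) * ((p₁ - p₂) / ρ - Y₂ ^ 2 * W ^ 2 / α₁),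
                   ρ₁ * c₁, -(ρ₁ * c₁), 0, 0, 0, 0;
                 0, 0, 0, 1, 0, 0, 0;
                 (Y₁ * W / Δ₂) * ((p₁ - p₂) / ρ + c₂ ^ 2 / α₂), 0, 0, 0, 1, 1, 0;
                 (ρ₂ * c₂ ^ 2 / Δ₂) * ((p₁ - p₂) / ρ + Y₁ ^ 2 * W ^ 2 / α₂),
                   0, 0, 0, ρ₂ * c₂, -(ρ₂ * c₂), 0;
                 0, 0, 0, 0, 0, 0, 1]) :
    R.det = 4 * (ρ₁ * c₁) * (ρ₂ * c₂) ∧ IsUnit R.det ∧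
      LinearIndependent ℝ (fun j : Fin 7 => (R.transpose j : Fin 7 → ℝ)) := by
  have hdet : R.det = 4 * (ρ₁ * c₁) * (ρ₂ * c₂) := by
    rw [hR, det_aux]
  have hunit : IsUnit R.det := by
    rw [hdet]
    exact (by positivity : (0:ℝ) < 4 * (ρ₁ * c₁) * (ρ₂ * c₂)).ne'.isUnit
  refine ⟨hdet, hunit, ?_⟩
  exact Matrix.linearIndependent_rows_iff_isUnit.2
    ((Matrix.isUnit_iff_isUnit_det _).2 (by rw [← Matrix.det_transpose] at hunit; exact hunit))
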